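/- arXiv:2601.01453 — 6 statements merged into one kernel-verified Lean document; each statement's English description precedes it below -/
import Mathlib

section
/- Let (Θ, μ) be a σ-finite measure space and X a Banach space. Suppose that for every m ∈ Θ we are given a family (G_m(t))_{t≥0} of bounded linear operators on X such that G_m(0) = I, G_m(t+s) = G_m(t)∘G_m(s) for all s,t ≥ 0, and t ↦ G_m(t)u is continuous on [0,∞) for every u ∈ X. Assume there is a locally bounded function M : [0,∞) → [0,∞) such that ‖G_m(t)‖ ≤ M(t) for all m ∈ Θ and t ≥ 0, and that for every t ≥ 0 and every Bochner-integrable u : Θ → X the function m ↦ G_m(t)(u(m)) is Bochner measurable. Then for every t ≥ 0 the assignment (G̃(t)u)(m) := G_m(t)(u(m)) defines a bounded linear operator on L¹(Θ, μ; X) with operator norm at most M(t), the family satisfies G̃(0) = I and G̃(t+s) = G̃(t)∘G̃(s) for all s,t ≥ 0, and for every u ∈ L¹(Θ, μ; X) one has ‖G̃(t)u − u‖_{L¹} → 0 as t → 0⁺ (i.e., (G̃(t))_{t≥0} is a strongly continuous semigroup on L¹(Θ, μ; X)). -/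
open MeasureTheory Filter

/-- Gluing a parameter-dependent family of strongly continuous semigroups, with a
uniform locally bounded growth function, into a strongly continuous semigroup on the
Bochner space `L¹(Θ, μ; X)`. -/
theorem stmt_0
    {Θ : Type*} [MeasurableSpace Θ] (μ : Measure Θ) [SigmaFinite μ]
    {X : Type*} [NormedAddCommGroup X] [NormedSpace ℝ X] [CompleteSpace X]
    (G : Θ → ℝ → X →L[ℝ] X)
    (hG0 : ∀ m, G m 0 = ContinuousLinearMap.id ℝ X)
    (hGsemi : ∀ m, ∀ t s : ℝ, 0 ≤ t → 0 ≤ s → G m (t + s) = (G m t).comp (G m s))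
    (hGcont : ∀ m (u : X), ContinuousOn (fun t => G m t u) (Set.Ici (0 : ℝ)))
    (M : ℝ → ℝ) (hMnonneg : ∀ t, 0 ≤ M t)
    (hMloc : ∀ T : ℝ, 0 ≤ T → ∃ C : ℝ, ∀ t ∈ Set.Icc (0 : ℝ) T, M t ≤ C)
    (hGbound : ∀ m, ∀ t : ℝ, 0 ≤ t → ‖G m t‖ ≤ M t)
    (hmeas : ∀ t : ℝ, 0 ≤ t → ∀ u : Θ → X, Integrable u μ →
        AEStronglyMeasurable (fun m => G m t (u m)) μ) :
    ∃ Gt : ℝ → (Lp X 1 μ →L[ℝ] Lp X 1 μ),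
      (∀ t : ℝ, 0 ≤ t → ∀ u : Lp X 1 μ, ⇑(Gt t u) =ᵐ[μ] fun m => G m t (u m)) ∧
      (∀ t : ℝ, 0 ≤ t → ‖Gt t‖ ≤ M t) ∧
      Gt 0 = ContinuousLinearMap.id ℝ (Lp X 1 μ) ∧
      (∀ t s : ℝ, 0 ≤ t → 0 ≤ s → Gt (t + s) = (Gt t).comp (Gt s)) ∧
      (∀ u : Lp X 1 μ,
        Tendsto (fun t : ℝ => ‖Gt t u - u‖) (nhdsWithin 0 (Set.Ioi 0)) (nhds 0)) := by
  classical
  -- integrability of the pointwise image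
  have key : ∀ t : ℝ, 0 ≤ t → ∀ u : Lp X 1 μ,
      Integrable (fun m => G m t (u m)) μ := by
    intro t ht u
    refine Integrable.mono' (((L1.integrable_coeFn u).norm).const_mul (M t))
      (hmeas t ht u (L1.integrable_coeFn u)) ?_
    filter_upwards with m
    calc ‖G m t (u m)‖ ≤ ‖G m t‖ * ‖u m‖ := (G m t).le_opNorm _
      _ ≤ M t * ‖u m‖ :=
        mul_le_mul_of_nonneg_right (hGbound m t ht) (norm_nonneg _)
  -- the linear map for t ≥ 0
  have normbd : ∀ t : ℝ, ∀ ht : 0 ≤ t, ∀ u : Lp X 1 μ,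
      ‖(key t ht u).toL1 _‖ ≤ M t * ‖u‖ := by
    intro t ht u
    rw [L1.norm_of_fun_eq_integral_norm, L1.norm_eq_integral_norm u,
      ← integral_const_mul]
    refine integral_mono (key t ht u).norm
      (((L1.integrable_coeFn u).norm).const_mul (M t)) fun m => ?_
    calc ‖G m t (u m)‖ ≤ ‖G m t‖ * ‖u m‖ := (G m t).le_opNorm _
      _ ≤ M t * ‖u m‖ :=
        mul_le_mul_of_nonneg_right (hGbound m t ht) (norm_nonneg _)
  let T : ∀ t : ℝ, 0 ≤ t → (Lp X 1 μ →L[ℝ] Lp X 1 μ) := fun t ht =>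
    LinearMap.mkContinuous
      { toFun := fun u => (key t ht u).toL1 _
        map_add' := by
          intro u v
          refine Lp.ext ?_
          have h1 := (key t ht (u + v)).coeFn_toL1
          have h2 := (key t ht u).coeFn_toL1
          have h3 := (key t ht v).coeFn_toL1
          have h4 : ⇑(u + v) =ᵐ[μ] ⇑u + ⇑v := Lp.coeFn_add u v
          have h5 := Lp.coeFn_add ((key t ht u).toL1 _) ((key t ht v).toL1 _)
          filter_upwards [h1, h2, h3, h4, h5] with m e1 e2 e3 e4 e5
          rw [e1, e5, Pi.add_apply, e2, e3, e4, Pi.add_apply, map_add]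
        map_smul' := by
          intro c u
          simp only [RingHom.id_apply]
          refine Lp.ext ?_
          have h1 := (key t ht (c • u)).coeFn_toL1
          have h2 := (key t ht u).coeFn_toL1
          have h4 : ⇑(c • u) =ᵐ[μ] c • ⇑u := Lp.coeFn_smul c u
          have h5 := Lp.coeFn_smul c ((key t ht u).toL1 _)
          filter_upwards [h1, h2, h4, h5] with m e1 e2 e4 e5
          rw [e1, e5, Pi.smul_apply, e2, e4, Pi.smul_apply, (G m t).map_smul] }
      (M t) (fun u => normbd t ht u)
  have Tapply : ∀ t : ℝ, ∀ ht : 0 ≤ t, ∀ u : Lp X 1 μ,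
      ⇑(T t ht u) =ᵐ[μ] fun m => G m t (u m) := fun t ht u =>
    (key t ht u).coeFn_toL1
  refine ⟨fun t => if ht : 0 ≤ t then T t ht else ContinuousLinearMap.id ℝ _,
    ?_, ?_, ?_, ?_, ?_⟩
  · intro t ht u
    dsimp only
    rw [dif_pos ht]
    exact Tapply t ht u
  · intro t ht
    dsimp only
    rw [dif_pos ht]
    exact LinearMap.mkContinuous_norm_le _ (hMnonneg t) _
  · dsimp only
    rw [dif_pos le_rfl]
    refine ContinuousLinearMap.ext fun u => Lp.ext ?_
    filter_upwards [Tapply 0 le_rfl u] with m e1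
    rw [e1, hG0 m]; rfl
  · intro t s ht hs
    dsimp only
    rw [dif_pos ht, dif_pos hs, dif_pos (add_nonneg ht hs)]
    refine ContinuousLinearMap.ext fun u => Lp.ext ?_
    have h1 := Tapply (t + s) (add_nonneg ht hs) u
    have h2 := Tapply t ht (T s hs u)
    have h3 := Tapply s hs u
    filter_upwards [h1, h2, h3] with m e1 e2 e3
    rw [e1, ContinuousLinearMap.comp_apply, e2, e3, hGsemi m t s ht hs]
    rfl
  · intro u
    obtain ⟨C, hC⟩ := hMloc 1 zero_le_one
    have hu : Integrable (⇑u) μ := L1.integrable_coeFn u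
    -- the integral characterization of the norm, for t > 0
    have heq : (fun t : ℝ =>
        ‖(if ht : 0 ≤ t then T t ht else ContinuousLinearMap.id ℝ _) u - u‖)
          =ᶠ[nhdsWithin 0 (Set.Ioi 0)]
        (fun t : ℝ => ∫ m, ‖G m t (u m) - u m‖ ∂μ) := by
      filter_upwards [self_mem_nhdsWithin] with t (ht : t ∈ Set.Ioi 0)
      rw [dif_pos ht.le, L1.norm_eq_integral_norm]
      refine integral_congr_ae ?_
      filter_upwards [Lp.coeFn_sub (T t ht.le u) u, Tapply t ht.le u]
        with m e1 e2
      rw [e1, Pi.sub_apply, e2]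
    have hlim : Tendsto (fun t : ℝ => ∫ m, ‖G m t (u m) - u m‖ ∂μ)
        (nhdsWithin 0 (Set.Ioi 0)) (nhds (∫ _, (0 : ℝ) ∂μ)) := by
      refine tendsto_integral_filter_of_dominated_convergence
        (fun m => (C + 1) * ‖u m‖) ?_ ?_ ((hu.norm).const_mul (C + 1)) ?_
      · filter_upwards [self_mem_nhdsWithin] with t (ht : t ∈ Set.Ioi 0)
        exact ((hmeas t ht.le u hu).sub (Lp.aestronglyMeasurable u)).norm
      · filter_upwards [Ioc_mem_nhdsGT_of_mem (Set.left_mem_Ico.2 one_pos)]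
          with t ht
        filter_upwards with m
        rw [Real.norm_eq_abs, abs_of_nonneg (norm_nonneg _)]
        calc ‖G m t (u m) - u m‖ ≤ ‖G m t (u m)‖ + ‖u m‖ := norm_sub_le _ _
          _ ≤ M t * ‖u m‖ + 1 * ‖u m‖ := by
              rw [one_mul]
              gcongr
              exact ((G m t).le_opNorm _).trans
                (mul_le_mul_of_nonneg_right (hGbound m t ht.1.le)
                  (norm_nonneg _))
          _ ≤ C * ‖u m‖ + 1 * ‖u m‖ := by
              gcongr
              exact hC t ⟨ht.1.le, ht.2⟩
          _ = (C + 1) * ‖u m‖ := by ring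
      · filter_upwards with m
        have hc : Tendsto (fun t : ℝ => G m t (u m)) (nhdsWithin 0 (Set.Ioi 0))
            (nhds (u m)) := by
          have := (hGcont m (u m) 0 Set.self_mem_Ici).mono_left
            (nhdsWithin_mono (0 : ℝ) Set.Ioi_subset_Ici_self)
          simpa [hG0 m] using this
        have : Tendsto (fun t : ℝ => ‖G m t (u m) - u m‖)
            (nhdsWithin 0 (Set.Ioi 0)) (nhds ‖u m - u m‖) :=
          ((hc.sub tendsto_const_nhds).norm)
        simpa using this
    rw [integral_zero] at hlim
    exact hlim.congr' heq.symm
end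

section
/- Let r₀, l ≥ 0, r ≥ max{r₀, l}, s₀ ≥ 1, β₀ ≥ 1, C > 0, M ≥ 1. Let β : {(m,s) : 0 ≤ m ≤ s} → [0,∞) be measurable and satisfy: (i) ∫₀^s β(m, s) dm ≤ β₀(1 + s^l) for all s > 0; (ii) sup_{s ≥ s₀} s^{−r} ∫₀^s m^r β(m, s) dm ≤ C. Let α₁, α₂ : [0,∞) → [0,∞) be measurable with α₁(m) ≤ α₂(m) ≤ M·α₁(m) for all m. Then for every measurable u : [0,∞) → [0,∞): ∫₀^∞ ( ∫_m^∞ α₂(s) β(m, s) u(s) ds ) (1 + m^r) dm ≤ C̄ ∫₀^∞ α₁(s) u(s) (1 + s^r) ds, where C̄ = M·(β₀(1 + s₀^l) + β₀ + C). -/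
open MeasureTheory

/-- Weighted `L¹` domination of the fragmentation gain operator by the weighted integral
of the loss rate: under moment bound (ii) and the zeroth-moment bound (i) on the kernel β,
and comparable rates `α₁ ≤ α₂ ≤ M α₁`, one has the stated inequality with
`C̄ = M(β₀(1+s₀^l) + β₀ + C)`. -/
theorem stmt_8
    (r₀ l r s₀ β₀ C M : ℝ)
    (hr₀ : 0 ≤ r₀) (hl : 0 ≤ l) (hr : max r₀ l ≤ r) (hs₀ : 1 ≤ s₀)
    (hβ₀ : 1 ≤ β₀) (hC : 0 < C) (hM : 1 ≤ M)
    (β : ℝ → ℝ → ℝ) (hβmeas : Measurable (Function.uncurry β))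
    (hβnonneg : ∀ m s, 0 ≤ β m s)
    (hβ1 : ∀ s > (0 : ℝ), ∫⁻ m in Set.Ioc (0 : ℝ) s, ENNReal.ofReal (β m s)
        ≤ ENNReal.ofReal (β₀ * (1 + s ^ l)))
    (hβ2 : ∀ s ≥ s₀, ∫⁻ m in Set.Ioc (0 : ℝ) s, ENNReal.ofReal (m ^ r * β m s)
        ≤ ENNReal.ofReal (C * s ^ r))
    (α₁ α₂ : ℝ → ℝ) (hα₁meas : Measurable α₁) (hα₂meas : Measurable α₂)
    (hα₁nonneg : ∀ m, 0 ≤ α₁ m)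
    (hαle : ∀ m, α₁ m ≤ α₂ m) (hαle' : ∀ m, α₂ m ≤ M * α₁ m)
    (u : ℝ → ℝ) (hu : Measurable u) (hunonneg : ∀ m, 0 ≤ u m) :
    ∫⁻ m in Set.Ioi (0 : ℝ),
        (∫⁻ s in Set.Ioi m, ENNReal.ofReal (α₂ s * β m s * u s)) *
          ENNReal.ofReal (1 + m ^ r)
      ≤ ENNReal.ofReal (M * (β₀ * (1 + s₀ ^ l) + β₀ + C)) *
          ∫⁻ s in Set.Ioi (0 : ℝ), ENNReal.ofReal (α₁ s * u s * (1 + s ^ r)) := by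
  have hrnn : (0:ℝ) ≤ r := le_trans hl (le_trans (le_max_right r₀ l) hr)
  have hlr : l ≤ r := le_trans (le_max_right r₀ l) hr
  set K : ℝ := β₀ * (1 + s₀ ^ l) + β₀ + C with hKdef
  have hs₀l : (0:ℝ) ≤ s₀ ^ l := Real.rpow_nonneg (by linarith) l
  have hKnn : 0 ≤ K := by nlinarith
  set H : ℝ → ℝ → ENNReal := fun m s => ENNReal.ofReal (α₂ s * β m s * u s * (1 + m ^ r)) with hHdef
  set G : ℝ → ℝ → ENNReal := fun m s =>
    Set.indicator {p : ℝ × ℝ | 0 < p.1 ∧ p.1 < p.2}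
      (fun p => ENNReal.ofReal (α₂ p.2 * β p.1 p.2 * u p.2 * (1 + p.1 ^ r))) (m, s) with hGdef
  have hα₂nn : ∀ s, 0 ≤ α₂ s := fun s => le_trans (hα₁nonneg s) (hαle s)
  have hGmeas : Measurable (Function.uncurry G) := by
    apply Measurable.indicator
    · exact (((hα₂meas.comp measurable_snd).mul hβmeas).mul
        (hu.comp measurable_snd) |>.mul
        (measurable_const.add (measurable_fst.pow_const r))).ennreal_ofReal
    · exact (measurableSet_lt measurable_const measurable_fst).inter
        (measurableSet_lt measurable_fst measurable_snd)
  have hβslice : ∀ s : ℝ, Measurable fun m => β m s := fun s =>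
    hβmeas.comp (measurable_id.prodMk measurable_const)
  -- inner identity in m direction
  have hGm : ∀ s : ℝ, ∫⁻ m, G m s = ∫⁻ m in Set.Ioo 0 s, H m s := by
    intro s
    rw [← lintegral_indicator measurableSet_Ioo _]
    refine lintegral_congr fun m => ?_
    by_cases h : 0 < m ∧ m < s
    · simp [hGdef, hHdef, Set.indicator, h, Set.mem_Ioo]
    · simp [hGdef, hHdef, Set.indicator, h, Set.mem_Ioo]
  calc
    ∫⁻ m in Set.Ioi (0:ℝ),
        (∫⁻ s in Set.Ioi m, ENNReal.ofReal (α₂ s * β m s * u s)) *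
          ENNReal.ofReal (1 + m ^ r)
      = ∫⁻ m in Set.Ioi (0:ℝ), ∫⁻ s in Set.Ioi m, H m s := by
        refine lintegral_congr fun m => ?_
        rw [← lintegral_mul_const' _ _ ENNReal.ofReal_ne_top]
        refine lintegral_congr fun s => ?_
        rw [← ENNReal.ofReal_mul (mul_nonneg (mul_nonneg (hα₂nn s) (hβnonneg m s)) (hunonneg s))]
    _ = ∫⁻ m in Set.Ioi (0:ℝ), ∫⁻ s, G m s := by
        refine setLIntegral_congr_fun measurableSet_Ioi (fun m hm => ?_)
        rw [← lintegral_indicator measurableSet_Ioi _]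
        refine lintegral_congr fun s => ?_
        by_cases h : m < s
        · simp [hGdef, hHdef, Set.indicator, h, Set.mem_Ioi, Set.mem_Ioi.mp hm]
        · simp [hGdef, hHdef, Set.indicator, h, Set.mem_Ioi, Set.mem_Ioi.mp hm]
    _ ≤ ∫⁻ m, ∫⁻ s, G m s := setLIntegral_le_lintegral _ _
    _ = ∫⁻ s, ∫⁻ m, G m s := lintegral_lintegral_swap hGmeas.aemeasurable
    _ ≤ ∫⁻ s, (Set.Ioi (0:ℝ)).indicator
          (fun s => ENNReal.ofReal (M * K) * ENNReal.ofReal (α₁ s * u s * (1 + s ^ r))) s := by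
        refine lintegral_mono fun s => ?_
        rw [hGm s]
        by_cases hs : 0 < s
        · -- main bound
          have hB : ∫⁻ m in Set.Ioo (0:ℝ) s, ENNReal.ofReal (β m s * (1 + m ^ r))
              ≤ ENNReal.ofReal (K * (1 + s ^ r)) := by
            rw [setLIntegral_congr Ioo_ae_eq_Ioc]
            have hsplit : ∫⁻ m in Set.Ioc (0:ℝ) s, ENNReal.ofReal (β m s * (1 + m ^ r))
                = (∫⁻ m in Set.Ioc (0:ℝ) s, ENNReal.ofReal (β m s))
                  + ∫⁻ m in Set.Ioc (0:ℝ) s, ENNReal.ofReal (m ^ r * β m s) := by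
              rw [← lintegral_add_left ((hβslice s).ennreal_ofReal)]
              refine setLIntegral_congr_fun measurableSet_Ioc (fun m hm => ?_)
              have hm0 : 0 ≤ m := le_of_lt hm.1
              rw [← ENNReal.ofReal_add (hβnonneg m s)
                (mul_nonneg (Real.rpow_nonneg hm0 r) (hβnonneg m s))]
              congr 1; ring
            rw [hsplit]
            have hsr : (0:ℝ) ≤ s ^ r := Real.rpow_nonneg (le_of_lt hs) r
            have hsl : (0:ℝ) ≤ s ^ l := Real.rpow_nonneg (le_of_lt hs) l
            have hb0nn : (0:ℝ) ≤ β₀ := by linarith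
            by_cases hss : s₀ ≤ s
            · have h1 := hβ1 s hs
              have h2 := hβ2 s hss
              refine le_trans (add_le_add h1 h2) ?_
              rw [← ENNReal.ofReal_add (mul_nonneg hb0nn (by linarith))
                (mul_nonneg hC.le hsr)]
              apply ENNReal.ofReal_le_ofReal
              have hs1 : (1:ℝ) ≤ s := le_trans hs₀ hss
              have hslr : s ^ l ≤ s ^ r := Real.rpow_le_rpow_of_exponent_le hs1 hlr
              rw [hKdef]
              nlinarith [mul_le_mul_of_nonneg_left hslr hb0nn,
                mul_nonneg (mul_nonneg hb0nn hs₀l) hsr, mul_nonneg hb0nn hs₀l,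
                mul_nonneg hC.le hsr, mul_nonneg hb0nn hsr]
            · push_neg at hss
              have h1 := hβ1 s hs
              have h2 : ∫⁻ m in Set.Ioc (0:ℝ) s, ENNReal.ofReal (m ^ r * β m s)
                  ≤ ENNReal.ofReal (s ^ r * (β₀ * (1 + s ^ l))) := by
                have hmono : ∫⁻ m in Set.Ioc (0:ℝ) s, ENNReal.ofReal (m ^ r * β m s)
                    ≤ ∫⁻ m in Set.Ioc (0:ℝ) s, ENNReal.ofReal (s ^ r * β m s) := by
                  refine setLIntegral_mono ((measurable_const.mul (hβslice s)).ennreal_ofReal)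
                    fun m hm => ?_
                  apply ENNReal.ofReal_le_ofReal
                  exact mul_le_mul_of_nonneg_right
                    (Real.rpow_le_rpow (le_of_lt hm.1) hm.2 hrnn) (hβnonneg m s)
                refine le_trans hmono ?_
                have : ∫⁻ m in Set.Ioc (0:ℝ) s, ENNReal.ofReal (s ^ r * β m s)
                    = ENNReal.ofReal (s ^ r) * ∫⁻ m in Set.Ioc (0:ℝ) s, ENNReal.ofReal (β m s) := by
                  rw [← lintegral_const_mul' _ _ ENNReal.ofReal_ne_top]
                  refine lintegral_congr fun m => ?_
                  rw [← ENNReal.ofReal_mul hsr]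
                rw [this, ENNReal.ofReal_mul hsr]
                exact mul_le_mul_right h1 _
              refine le_trans (add_le_add h1 h2) ?_
              rw [← ENNReal.ofReal_add (mul_nonneg hb0nn (by linarith))
                (mul_nonneg hsr (mul_nonneg hb0nn (by linarith)))]
              apply ENNReal.ofReal_le_ofReal
              have hsl' : s ^ l ≤ s₀ ^ l := Real.rpow_le_rpow (le_of_lt hs) (le_of_lt hss) hl
              rw [hKdef]
              nlinarith [mul_le_mul_of_nonneg_left hsl' hb0nn,
                mul_le_mul_of_nonneg_right (mul_le_mul_of_nonneg_left hsl' hb0nn) hsr,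
                mul_nonneg hb0nn hs₀l, mul_nonneg (mul_nonneg hb0nn hs₀l) hsr,
                mul_nonneg hC.le hsr, mul_nonneg hb0nn hsr]
          have hfac : ∫⁻ m in Set.Ioo (0:ℝ) s, H m s
              = ENNReal.ofReal (α₂ s * u s) *
                ∫⁻ m in Set.Ioo (0:ℝ) s, ENNReal.ofReal (β m s * (1 + m ^ r)) := by
            rw [← lintegral_const_mul' _ _ ENNReal.ofReal_ne_top]
            refine lintegral_congr fun m => ?_
            rw [← ENNReal.ofReal_mul (mul_nonneg (hα₂nn s) (hunonneg s))]
            simp only [hHdef]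
            congr 1; ring
          rw [hfac]
          have hstep : ENNReal.ofReal (α₂ s * u s) * ENNReal.ofReal (K * (1 + s ^ r))
              ≤ ENNReal.ofReal (M * K) * ENNReal.ofReal (α₁ s * u s * (1 + s ^ r)) := by
            rw [← ENNReal.ofReal_mul (mul_nonneg (hα₂nn s) (hunonneg s)),
              ← ENNReal.ofReal_mul (by positivity)]
            apply ENNReal.ofReal_le_ofReal
            have hsr : (0:ℝ) ≤ s ^ r := Real.rpow_nonneg (le_of_lt hs) r
            have hK1 : (0:ℝ) ≤ K * (1 + s ^ r) := mul_nonneg hKnn (by positivity)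
            have := mul_le_mul_of_nonneg_right (hαle' s)
              (mul_nonneg (hunonneg s) hK1)
            nlinarith [this]
          refine le_trans (le_trans (mul_le_mul_right hB _) hstep) ?_
          rw [Set.indicator_of_mem (Set.mem_Ioi.mpr hs)]
        · have he : Set.Ioo (0:ℝ) s = ∅ := Set.Ioo_eq_empty hs
          rw [he]
          simp
    _ = ENNReal.ofReal (M * K) *
          ∫⁻ s in Set.Ioi (0:ℝ), ENNReal.ofReal (α₁ s * u s * (1 + s ^ r)) := by
        rw [lintegral_indicator measurableSet_Ioi _,
          ← lintegral_const_mul' _ _ ENNReal.ofReal_ne_top]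
end

section
/- Let r₀ ≥ 0, s₀ ≥ 0 and let β : {(m,s) : 0 ≤ m ≤ s} → [0,∞) be measurable. Define c_r(s) := s ∫₀¹ z^r β(z s, s) dz for r ≥ r₀ and s > 0. Assume: (i) sup_{s ≥ s₀} s ∫₀¹ z^{r₀} β(z s, s) dz ≤ C < ∞; (ii) the family {z ↦ s·z^{r₀}·β(z s, s)}_{s ≥ s₀} is uniformly integrable on [0,1], i.e. for every ε > 0 there is δ > 0 such that for every measurable A ⊆ [0,1] with Lebesgue measure less than δ one has sup_{s ≥ s₀} s ∫_A z^{r₀} β(z s, s) dz ≤ ε. Then lim_{r → ∞} sup_{s ≥ s₀} c_r(s) = 0, i.e. the normalized r-th moments c_r(s) tend to 0 as r → ∞ uniformly in s ≥ s₀. -/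
open MeasureTheory Filter

/-- If the family `{z ↦ s z^{r₀} β(zs,s)}_{s ≥ s₀}` is bounded in `L¹(0,1)` and uniformly
integrable, then the normalized moments `c_r(s) = s∫₀¹ z^r β(zs,s) dz` tend to `0` as
`r → ∞` uniformly in `s ≥ s₀`. -/
theorem stmt_9 (r₀ s₀ C : ℝ) (hr₀ : 0 ≤ r₀) (hs₀ : 0 ≤ s₀) (hC : 0 ≤ C)
    (β : ℝ → ℝ → ℝ) (hβmeas : Measurable (Function.uncurry β))
    (hβnonneg : ∀ m s, 0 ≤ β m s)
    (hbound : ∀ s ≥ s₀, ENNReal.ofReal s *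
        ∫⁻ z in Set.Ioc (0 : ℝ) 1, ENNReal.ofReal (z ^ r₀ * β (z * s) s)
      ≤ ENNReal.ofReal C)
    (hUI : ∀ ε > (0 : ℝ), ∃ δ > (0 : ℝ), ∀ A ⊆ Set.Ioc (0 : ℝ) 1, MeasurableSet A →
        volume A < ENNReal.ofReal δ →
        ∀ s ≥ s₀, ENNReal.ofReal s * ∫⁻ z in A, ENNReal.ofReal (z ^ r₀ * β (z * s) s)
          ≤ ENNReal.ofReal ε) :
    Tendsto
      (fun r : ℝ => ⨆ (s : ℝ) (_ : s₀ ≤ s),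
        ENNReal.ofReal s * ∫⁻ z in Set.Ioc (0 : ℝ) 1, ENNReal.ofReal (z ^ r * β (z * s) s))
      atTop (nhds 0) := by
  rw [ENNReal.tendsto_nhds_zero]
  intro ε hε
  -- pick a real e > 0 with ofReal e + ofReal e ≤ ε
  obtain ⟨p, hp0, hpε⟩ := ENNReal.lt_iff_exists_nnreal_btwn.mp (lt_min zero_lt_one hε)
  set e : ℝ := (p : ℝ) / 2 with he_def
  have hp0' : (0 : ℝ) < p := by exact_mod_cast ENNReal.coe_pos.mp hp0
  have he : 0 < e := by positivity
  have hee : ENNReal.ofReal e + ENNReal.ofReal e ≤ ε := by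
    rw [← ENNReal.ofReal_add he.le he.le]
    have h2 : e + e = (p : ℝ) := by ring
    rw [h2, ENNReal.ofReal_coe_nnreal]
    exact le_trans hpε.le (min_le_right _ _)
  obtain ⟨δ, hδ, hδUI⟩ := hUI e he
  set δ' : ℝ := min δ 1 with hδ'_def
  have hδ'0 : 0 < δ' := lt_min hδ zero_lt_one
  have hδ'1 : δ' ≤ 1 := min_le_right _ _
  set a : ℝ := 1 - δ' / 2 with ha_def
  have ha0 : 0 < a := by simp only [ha_def]; linarith
  have ha1 : a < 1 := by simp only [ha_def]; linarith
  -- tail estimate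
  have htail : ∀ s ≥ s₀, ∀ r ≥ r₀,
      ENNReal.ofReal s * ∫⁻ z in Set.Ioc a 1, ENNReal.ofReal (z ^ r * β (z * s) s)
        ≤ ENNReal.ofReal e := by
    intro s hs r hr
    have hmono : ∫⁻ z in Set.Ioc a 1, ENNReal.ofReal (z ^ r * β (z * s) s)
        ≤ ∫⁻ z in Set.Ioc a 1, ENNReal.ofReal (z ^ r₀ * β (z * s) s) := by
      refine lintegral_mono_ae ((ae_restrict_iff' measurableSet_Ioc).mpr (ae_of_all _ ?_))
      intro z hz
      have hz0 : 0 < z := lt_trans ha0 hz.1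
      have : z ^ r ≤ z ^ r₀ :=
        Real.rpow_le_rpow_of_exponent_ge hz0 hz.2 hr
      exact ENNReal.ofReal_le_ofReal (mul_le_mul_of_nonneg_right this (hβnonneg _ _))
    calc ENNReal.ofReal s * ∫⁻ z in Set.Ioc a 1, ENNReal.ofReal (z ^ r * β (z * s) s)
        ≤ ENNReal.ofReal s * ∫⁻ z in Set.Ioc a 1, ENNReal.ofReal (z ^ r₀ * β (z * s) s) :=
          mul_le_mul_right hmono _
      _ ≤ ENNReal.ofReal e := by
          refine hδUI _ (Set.Ioc_subset_Ioc_left ha0.le) measurableSet_Ioc ?_ s hs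
          rw [Real.volume_Ioc]
          refine ENNReal.ofReal_lt_ofReal_iff hδ |>.mpr ?_
          have : 1 - a = δ' / 2 := by simp [ha_def]
          rw [this]
          have : δ' ≤ δ := min_le_left _ _
          linarith
  -- head estimate
  have hhead : ∀ s ≥ s₀, ∀ r ≥ r₀,
      ENNReal.ofReal s * ∫⁻ z in Set.Ioc 0 a, ENNReal.ofReal (z ^ r * β (z * s) s)
        ≤ ENNReal.ofReal (a ^ (r - r₀) * C) := by
    intro s hs r hr
    have hmono : ∫⁻ z in Set.Ioc 0 a, ENNReal.ofReal (z ^ r * β (z * s) s)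
        ≤ ∫⁻ z in Set.Ioc 0 a,
            ENNReal.ofReal (a ^ (r - r₀)) * ENNReal.ofReal (z ^ r₀ * β (z * s) s) := by
      refine lintegral_mono_ae ((ae_restrict_iff' measurableSet_Ioc).mpr (ae_of_all _ ?_))
      intro z hz
      rw [← ENNReal.ofReal_mul (by positivity)]
      refine ENNReal.ofReal_le_ofReal ?_
      have hz0 : 0 < z := hz.1
      have hsplit : z ^ r = z ^ (r - r₀) * z ^ r₀ := by
        rw [← Real.rpow_add hz0]; ring_nf
      have hle : z ^ (r - r₀) ≤ a ^ (r - r₀) :=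
        Real.rpow_le_rpow hz0.le hz.2 (by linarith)
      calc z ^ r * β (z * s) s = z ^ (r - r₀) * (z ^ r₀ * β (z * s) s) := by
              rw [hsplit]; ring
        _ ≤ a ^ (r - r₀) * (z ^ r₀ * β (z * s) s) := by
              refine mul_le_mul_of_nonneg_right hle ?_
              exact mul_nonneg (Real.rpow_nonneg hz0.le _) (hβnonneg _ _)
    rw [lintegral_const_mul' _ _ ENNReal.ofReal_ne_top] at hmono
    calc ENNReal.ofReal s * ∫⁻ z in Set.Ioc 0 a, ENNReal.ofReal (z ^ r * β (z * s) s)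
        ≤ ENNReal.ofReal s * (ENNReal.ofReal (a ^ (r - r₀)) *
            ∫⁻ z in Set.Ioc 0 a, ENNReal.ofReal (z ^ r₀ * β (z * s) s)) :=
          mul_le_mul_right hmono _
      _ = ENNReal.ofReal (a ^ (r - r₀)) * (ENNReal.ofReal s *
            ∫⁻ z in Set.Ioc 0 a, ENNReal.ofReal (z ^ r₀ * β (z * s) s)) := by ring
      _ ≤ ENNReal.ofReal (a ^ (r - r₀)) * (ENNReal.ofReal s *
            ∫⁻ z in Set.Ioc (0 : ℝ) 1, ENNReal.ofReal (z ^ r₀ * β (z * s) s)) := by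
          refine mul_le_mul_right (mul_le_mul_right ?_ _) _
          exact lintegral_mono_set (Set.Ioc_subset_Ioc_right ha1.le)
      _ ≤ ENNReal.ofReal (a ^ (r - r₀)) * ENNReal.ofReal C :=
          mul_le_mul_right (hbound s hs) _
      _ = ENNReal.ofReal (a ^ (r - r₀) * C) :=
          (ENNReal.ofReal_mul (by positivity)).symm
  -- a^(r-r₀) * C → 0
  have ht : Tendsto (fun r : ℝ => a ^ (r - r₀) * C) atTop (nhds 0) := by
    have h1 : Tendsto (fun t : ℝ => a ^ t) atTop (nhds 0) :=
      tendsto_rpow_atTop_of_base_lt_one a (by linarith) ha1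
    have h2 : Tendsto (fun r : ℝ => r - r₀) atTop atTop :=
      tendsto_atTop_add_const_right _ _ tendsto_id
    simpa using (h1.comp h2).mul_const C
  filter_upwards [eventually_ge_atTop r₀, ht.eventually_lt_const he] with r hr hre
  refine iSup₂_le fun s hs => ?_
  have hsplit : Set.Ioc (0 : ℝ) 1 = Set.Ioc 0 a ∪ Set.Ioc a 1 :=
    (Set.Ioc_union_Ioc_eq_Ioc ha0.le ha1.le).symm
  rw [hsplit, lintegral_union measurableSet_Ioc (Set.Ioc_disjoint_Ioc_of_le le_rfl), mul_add]
  calc ENNReal.ofReal s * (∫⁻ z in Set.Ioc 0 a, ENNReal.ofReal (z ^ r * β (z * s) s))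
        + ENNReal.ofReal s * (∫⁻ z in Set.Ioc a 1, ENNReal.ofReal (z ^ r * β (z * s) s))
      ≤ ENNReal.ofReal (a ^ (r - r₀) * C) + ENNReal.ofReal e :=
        add_le_add (hhead s hs r hr) (htail s hs r hr)
    _ ≤ ENNReal.ofReal e + ENNReal.ofReal e :=
        add_le_add_left (ENNReal.ofReal_le_ofReal hre.le) _
    _ ≤ ε := hee
end

section
/- Let β : {(m,s) : 0 ≤ m ≤ s} → [0,∞) be measurable, and define c_r(s) := s ∫₀¹ z^r β(z s, s) dz. Suppose there exist s₀ > 0, 0 < η ≤ 1, b₁, b₂ ≥ 0, r₀ ≥ 0 and p > 1 such that for all s ≥ s₀: (i) c_{r₀}(s) ≤ b₁, and (ii) ( ∫_{1−η}^1 β(z s, s)^p dz )^{1/p} ≤ b₂ / s. Then, with q the conjugate exponent (1/p + 1/q = 1), for all r > r₀ and s ≥ s₀ one has c_r(s) ≤ (1 − η)^{r − r₀} b₁ + b₂ (q r + 1)^{−1/q}; in particular lim_{r → ∞} sup_{s ≥ s₀} c_r(s) = 0. -/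
open MeasureTheory Filter

/-- De la Vallée-Poussin type criterion: a finite normalized moment `c_{r₀}` together with
an `L^p` bound on the kernel near the parent mass forces
`c_r(s) ≤ (1-η)^{r-r₀} b₁ + b₂ (qr+1)^{-1/q}` for `r > r₀, s ≥ s₀`, hence
`sup_{s ≥ s₀} c_r(s) → 0` as `r → ∞`. -/
theorem stmt_10 (s₀ η b₁ b₂ r₀ p q : ℝ)
    (hs₀ : 0 < s₀) (hη0 : 0 < η) (hη1 : η ≤ 1) (hb₁ : 0 ≤ b₁) (hb₂ : 0 ≤ b₂)
    (hr₀ : 0 ≤ r₀) (hp : 1 < p) (hpq : 1 / p + 1 / q = 1)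
    (β : ℝ → ℝ → ℝ) (hβmeas : Measurable (Function.uncurry β))
    (hβnonneg : ∀ m s, 0 ≤ β m s)
    (hmom : ∀ s ≥ s₀, ENNReal.ofReal s *
        ∫⁻ z in Set.Ioc (0 : ℝ) 1, ENNReal.ofReal (z ^ r₀ * β (z * s) s)
      ≤ ENNReal.ofReal b₁)
    (hLp : ∀ s ≥ s₀,
        (∫⁻ z in Set.Ioc (1 - η) 1, ENNReal.ofReal (β (z * s) s ^ p)) ^ (1 / p)
      ≤ ENNReal.ofReal (b₂ / s)) :
    (∀ r > r₀, ∀ s ≥ s₀, ENNReal.ofReal s *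
        ∫⁻ z in Set.Ioc (0 : ℝ) 1, ENNReal.ofReal (z ^ r * β (z * s) s)
      ≤ ENNReal.ofReal ((1 - η) ^ (r - r₀) * b₁ + b₂ * (q * r + 1) ^ (-(1 / q)))) ∧
    Tendsto
      (fun r : ℝ => ⨆ (s : ℝ) (_ : s₀ ≤ s),
        ENNReal.ofReal s * ∫⁻ z in Set.Ioc (0 : ℝ) 1, ENNReal.ofReal (z ^ r * β (z * s) s))
      atTop (nhds 0) := by
  have hp0 : 0 < p := lt_trans one_pos hp
  have h1p : 0 < 1 / p := by positivity
  have h1p' : 1 / p < 1 := (div_lt_one hp0).mpr hp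
  have h1q : 0 < 1 / q := by linarith
  have hq0 : 0 < q := one_div_pos.mp h1q
  have hq1 : 1 < q := (div_lt_one hq0).mp (by linarith)
  have hpq' : p.HolderConjugate q := Real.holderConjugate_iff.mpr ⟨hp, by rw [← one_div, ← one_div]; exact hpq⟩
  have hη1' : (0:ℝ) ≤ 1 - η := by linarith
  -- the key bound
  have key : ∀ r > r₀, ∀ s ≥ s₀, ENNReal.ofReal s *
        ∫⁻ z in Set.Ioc (0 : ℝ) 1, ENNReal.ofReal (z ^ r * β (z * s) s)
      ≤ ENNReal.ofReal ((1 - η) ^ (r - r₀) * b₁ + b₂ * (q * r + 1) ^ (-(1 / q))) := by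
    intro r hr s hs
    have hs0 : 0 < s := lt_of_lt_of_le hs₀ hs
    have hβm : Measurable fun z : ℝ => β (z * s) s :=
      hβmeas.comp ((measurable_mul_const s).prodMk measurable_const)
    have hrr₀ : 0 ≤ r - r₀ := by linarith
    have hqr1 : 0 < q * r + 1 := by nlinarith
    -- split the integral
    have hsplit : Set.Ioc (0:ℝ) 1 = Set.Ioc 0 (1-η) ∪ Set.Ioc (1-η) 1 :=
      (Set.Ioc_union_Ioc_eq_Ioc (by linarith) (by linarith)).symm
    rw [hsplit, lintegral_union measurableSet_Ioc (Set.Ioc_disjoint_Ioc_of_le le_rfl), mul_add]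
    -- first piece
    have h1 : ENNReal.ofReal s *
        ∫⁻ z in Set.Ioc (0:ℝ) (1-η), ENNReal.ofReal (z ^ r * β (z * s) s)
        ≤ ENNReal.ofReal ((1 - η) ^ (r - r₀) * b₁) := by
      have hmono : ∫⁻ z in Set.Ioc (0:ℝ) (1-η), ENNReal.ofReal (z ^ r * β (z * s) s)
          ≤ ∫⁻ z in Set.Ioc (0:ℝ) (1-η),
              ENNReal.ofReal ((1-η) ^ (r - r₀)) * ENNReal.ofReal (z ^ r₀ * β (z * s) s) := by
        refine setLIntegral_mono (by fun_prop) ?_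
        intro z hz
        rw [← ENNReal.ofReal_mul (Real.rpow_nonneg hη1' _)]
        refine ENNReal.ofReal_le_ofReal ?_
        have hz0 : 0 < z := hz.1
        have : z ^ r ≤ (1-η) ^ (r - r₀) * z ^ r₀ := by
          have : z ^ r = z ^ (r - r₀) * z ^ r₀ := by
            rw [← Real.rpow_add hz0]; ring_nf
          rw [this]
          exact mul_le_mul_of_nonneg_right
            (Real.rpow_le_rpow hz0.le hz.2 hrr₀) (Real.rpow_nonneg hz0.le _)
        calc z ^ r * β (z*s) s ≤ ((1-η) ^ (r - r₀) * z ^ r₀) * β (z*s) s :=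
              mul_le_mul_of_nonneg_right this (hβnonneg _ _)
          _ = (1-η) ^ (r - r₀) * (z ^ r₀ * β (z*s) s) := by ring
      rw [lintegral_const_mul' _ _ ENNReal.ofReal_ne_top] at hmono
      calc ENNReal.ofReal s * ∫⁻ z in Set.Ioc (0:ℝ) (1-η), ENNReal.ofReal (z ^ r * β (z * s) s)
          ≤ ENNReal.ofReal s * (ENNReal.ofReal ((1-η) ^ (r - r₀)) *
              ∫⁻ z in Set.Ioc (0:ℝ) (1-η), ENNReal.ofReal (z ^ r₀ * β (z * s) s)) :=
            mul_le_mul_right hmono _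
        _ = ENNReal.ofReal ((1-η) ^ (r - r₀)) * (ENNReal.ofReal s *
              ∫⁻ z in Set.Ioc (0:ℝ) (1-η), ENNReal.ofReal (z ^ r₀ * β (z * s) s)) := by ring
        _ ≤ ENNReal.ofReal ((1-η) ^ (r - r₀)) * (ENNReal.ofReal s *
              ∫⁻ z in Set.Ioc (0:ℝ) 1, ENNReal.ofReal (z ^ r₀ * β (z * s) s)) := by
            gcongr
            linarith
        _ ≤ ENNReal.ofReal ((1-η) ^ (r - r₀)) * ENNReal.ofReal b₁ :=
            mul_le_mul_right (hmom s hs) _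
        _ = ENNReal.ofReal ((1 - η) ^ (r - r₀) * b₁) :=
            (ENNReal.ofReal_mul (Real.rpow_nonneg hη1' _)).symm
    -- second piece
    have h2 : ENNReal.ofReal s *
        ∫⁻ z in Set.Ioc (1-η) 1, ENNReal.ofReal (z ^ r * β (z * s) s)
        ≤ ENNReal.ofReal (b₂ * (q * r + 1) ^ (-(1 / q))) := by
      have hcongr : ∫⁻ z in Set.Ioc (1-η) 1, ENNReal.ofReal (z ^ r * β (z * s) s)
          = ∫⁻ z in Set.Ioc (1-η) 1,
              ((fun z => ENNReal.ofReal (β (z * s) s)) * fun z => ENNReal.ofReal (z ^ r)) z := by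
        refine setLIntegral_congr_fun measurableSet_Ioc (fun z hz => ?_)
        have hz0 : 0 < z := lt_of_le_of_lt hη1' hz.1
        simp only [Pi.mul_apply]
        rw [← ENNReal.ofReal_mul (hβnonneg _ _), mul_comm]
      rw [hcongr]
      have hH := ENNReal.lintegral_mul_le_Lp_mul_Lq
        (volume.restrict (Set.Ioc (1-η) 1)) hpq'
        ((ENNReal.measurable_ofReal.comp hβm).aemeasurable)
        ((ENNReal.measurable_ofReal.comp (measurable_id.pow_const r)).aemeasurable)
      have hA : (∫⁻ z in Set.Ioc (1-η) 1, ENNReal.ofReal (β (z * s) s) ^ p) ^ (1/p)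
          ≤ ENNReal.ofReal (b₂ / s) := by
        simp_rw [ENNReal.ofReal_rpow_of_nonneg (hβnonneg _ _) hp0.le]
        exact hLp s hs
      have hr0 : 0 < r := lt_of_le_of_lt hr₀ hr
      have hrq : 0 < r * q := mul_pos hr0 hq0
      have hB1 : ∫⁻ z in Set.Ioc (1-η) 1, ENNReal.ofReal (z ^ r) ^ q
          = ∫⁻ z in Set.Ioc (1-η) 1, ENNReal.ofReal (z ^ (r*q)) := by
        refine setLIntegral_congr_fun measurableSet_Ioc (fun z hz => ?_)
        have hz0 : 0 < z := lt_of_le_of_lt hη1' hz.1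
        rw [ENNReal.ofReal_rpow_of_nonneg (Real.rpow_nonneg hz0.le _) hq0.le,
          ← Real.rpow_mul hz0.le]
      have hint : IntegrableOn (fun z : ℝ => z ^ (r*q)) (Set.Ioc 0 1) := by
        have := (intervalIntegral.intervalIntegrable_rpow'
          (a := 0) (b := 1) (r := r*q) (by linarith)).1
        simpa using this
      have hB3 : ∫⁻ z in Set.Ioc (0:ℝ) 1, ENNReal.ofReal (z ^ (r*q))
          = ENNReal.ofReal (1 / (r*q+1)) := by
        rw [← ofReal_integral_eq_lintegral_ofReal hint ?_]
        · congr 1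
          rw [← intervalIntegral.integral_of_le zero_le_one,
            integral_rpow (Or.inl (by linarith))]
          rw [Real.one_rpow, Real.zero_rpow (by positivity)]
          ring
        · filter_upwards [ae_restrict_mem measurableSet_Ioc] with z hz
          exact Real.rpow_nonneg hz.1.le _
      have hB : (∫⁻ z in Set.Ioc (1-η) 1, ENNReal.ofReal (z ^ r) ^ q) ^ (1/q)
          ≤ ENNReal.ofReal ((q * r + 1) ^ (-(1/q))) := by
        rw [hB1]
        calc (∫⁻ z in Set.Ioc (1-η) 1, ENNReal.ofReal (z ^ (r*q))) ^ (1/q)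
            ≤ (∫⁻ z in Set.Ioc (0:ℝ) 1, ENNReal.ofReal (z ^ (r*q))) ^ (1/q) :=
              ENNReal.rpow_le_rpow
                (lintegral_mono_set (Set.Ioc_subset_Ioc_left hη1')) h1q.le
          _ = ENNReal.ofReal ((1 / (r*q+1)) ^ (1/q)) := by
              rw [hB3, ENNReal.ofReal_rpow_of_nonneg (by positivity) h1q.le]
          _ = ENNReal.ofReal ((q * r + 1) ^ (-(1/q))) := by
              rw [one_div (r*q+1), Real.inv_rpow (by linarith), ← Real.rpow_neg (by linarith),
                mul_comm r q]
      have hpow0 : (0:ℝ) ≤ (q * r + 1) ^ (-(1/q)) := Real.rpow_nonneg (by nlinarith) _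
      calc ENNReal.ofReal s * ∫⁻ z in Set.Ioc (1-η) 1,
            ((fun z => ENNReal.ofReal (β (z * s) s)) * fun z => ENNReal.ofReal (z ^ r)) z
          ≤ ENNReal.ofReal s *
              (ENNReal.ofReal (b₂ / s) * ENNReal.ofReal ((q * r + 1) ^ (-(1/q)))) :=
            mul_le_mul_right (hH.trans (mul_le_mul' hA hB)) _
        _ = ENNReal.ofReal (s * (b₂ / s) * (q * r + 1) ^ (-(1/q))) := by
            rw [← ENNReal.ofReal_mul (div_nonneg hb₂ hs0.le), ← ENNReal.ofReal_mul (by positivity),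
              mul_assoc]
        _ = ENNReal.ofReal (b₂ * (q * r + 1) ^ (-(1 / q))) := by
            rw [mul_comm s (b₂ / s), div_mul_cancel₀ _ hs0.ne']
    calc _ ≤ ENNReal.ofReal ((1 - η) ^ (r - r₀) * b₁) + ENNReal.ofReal (b₂ * (q * r + 1) ^ (-(1 / q))) :=
          add_le_add h1 h2
      _ = _ := (ENNReal.ofReal_add (by positivity) (by positivity)).symm
  refine ⟨key, ?_⟩
  have hT : Tendsto (fun r : ℝ =>
      ENNReal.ofReal ((1 - η) ^ (r - r₀) * b₁ + b₂ * (q * r + 1) ^ (-(1 / q))))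
      atTop (nhds 0) := by
    have t1 : Tendsto (fun r : ℝ => (1-η) ^ (r - r₀)) atTop (nhds 0) := by
      have := (tendsto_rpow_atTop_of_base_lt_one (1-η) (by linarith) (by linarith)).comp
        (tendsto_atTop_add_const_right atTop (-r₀) tendsto_id)
      simpa [Function.comp_def, sub_eq_add_neg] using this
    have t2 : Tendsto (fun r : ℝ => (q * r + 1) ^ (-(1/q))) atTop (nhds 0) := by
      have := (tendsto_rpow_neg_atTop h1q).comp
        (tendsto_atTop_add_const_right atTop 1 (tendsto_id.const_mul_atTop hq0))
      simpa [Function.comp_def] using this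
    have hreal : Tendsto (fun r : ℝ =>
        (1 - η) ^ (r - r₀) * b₁ + b₂ * (q * r + 1) ^ (-(1 / q))) atTop (nhds 0) := by
      simpa using (t1.mul_const b₁).add (t2.const_mul b₂)
    simpa using ENNReal.tendsto_ofReal hreal
  refine tendsto_of_tendsto_of_tendsto_of_le_of_le' tendsto_const_nhds hT
    (Eventually.of_forall fun _ => zero_le) ?_
  filter_upwards [eventually_gt_atTop r₀] with r hr
  exact iSup₂_le fun s hs => key r hr s hs
end

section
/- Let a₀ > 0, γ > 0, m₀ ≥ 1, and let α₁ : [0,∞) → [0,∞) be measurable with α₁(m) ≥ a₀ m^γ for all m ≥ m₀. Then for all p ≥ 0 and q ≥ 0 there exist constants C₁, C₂ > 0 (depending only on q, γ, a₀, m₀) such that for every measurable g : [0,∞) → [0,∞) and every t > 0: ∫₀^∞ e^{−α₁(m) t} g(m) (1 + m^{p+q}) dm ≤ ( C₁ + C₂ · t^{−q/γ} ) · ∫₀^∞ g(m) (1 + m^p) dm. -/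
open MeasureTheory

lemma aux_rpow_exp (r : ℝ) (hr : 0 ≤ r) (c : ℝ) (hc : 0 < c) (x : ℝ) (hx : 0 ≤ x) :
    x ^ r * Real.exp (-(c * x)) ≤ (r / (Real.exp 1 * c)) ^ r := by
  rcases hr.eq_or_lt with h0 | h0
  · subst h0
    simp only [Real.rpow_zero, one_mul]
    exact Real.exp_le_one_iff.mpr (by nlinarith)
  rcases hx.eq_or_lt with hx0 | hx0
  · rw [← hx0, Real.zero_rpow h0.ne', zero_mul]
    positivity
  · have he : (0:ℝ) < Real.exp 1 := Real.exp_pos 1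
    have hb : (0:ℝ) < r / (Real.exp 1 * c) := by positivity
    rw [Real.rpow_def_of_pos hx0, Real.rpow_def_of_pos hb, ← Real.exp_add]
    apply Real.exp_le_exp.mpr
    have hlog : Real.log (c * x / r) ≤ c * x / r - 1 :=
      Real.log_le_sub_one_of_pos (by positivity)
    have h1 : Real.log (c * x / r) = Real.log c + Real.log x - Real.log r := by
      rw [Real.log_div (by positivity) h0.ne', Real.log_mul hc.ne' hx0.ne']
    have h2 : Real.log (r / (Real.exp 1 * c)) = Real.log r - 1 - Real.log c := by
      rw [Real.log_div h0.ne' (by positivity), Real.log_mul he.ne' hc.ne', Real.log_exp]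
      ring
    rw [h2]
    have := mul_le_mul_of_nonneg_right hlog hr
    rw [h1] at this
    have hcx : (c * x / r - 1) * r = c * x - r := by field_simp
    nlinarith

/-- Moment-regularisation estimate for absorption semigroups: if `α₁(m) ≥ a₀ m^γ` for
`m ≥ m₀`, then integrating `e^{-α₁(m)t} g(m)` against the weight `1+m^{p+q}` is bounded by
`(C₁ + C₂ t^{-q/γ})` times the integral of `g` against `1+m^p`. -/
theorem stmt_14 (a₀ γ m₀ p q : ℝ) (ha₀ : 0 < a₀) (hγ : 0 < γ) (hm₀ : 1 ≤ m₀)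
    (hp : 0 ≤ p) (hq : 0 ≤ q)
    (α₁ : ℝ → ℝ) (hα₁meas : Measurable α₁) (hα₁nonneg : ∀ m, 0 ≤ α₁ m)
    (hα₁ : ∀ m ≥ m₀, a₀ * m ^ γ ≤ α₁ m) :
    ∃ C₁ > (0 : ℝ), ∃ C₂ > (0 : ℝ), ∀ g : ℝ → ℝ, Measurable g → (∀ m, 0 ≤ g m) →
      ∀ t > (0 : ℝ),
      ∫⁻ m in Set.Ioi (0 : ℝ),
          ENNReal.ofReal (Real.exp (-(α₁ m * t)) * g m * (1 + m ^ (p + q)))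
        ≤ ENNReal.ofReal (C₁ + C₂ * t ^ (-(q / γ))) *
            ∫⁻ m in Set.Ioi (0 : ℝ), ENNReal.ofReal (g m * (1 + m ^ p)) := by
  set r : ℝ := q / γ with hr_def
  have hr : 0 ≤ r := by positivity
  have he : (0:ℝ) < Real.exp 1 := Real.exp_pos 1
  set C₁ : ℝ := 1 + m₀ ^ q with hC₁_def
  set C₂ : ℝ := (q / (Real.exp 1 * γ * a₀)) ^ r with hC₂_def
  have hm₀q : (0:ℝ) < m₀ ^ q := Real.rpow_pos_of_pos (by linarith) q
  have hC₁ : 0 < C₁ := by positivity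
  have hC₂ : 0 < C₂ := by
    rcases hq.eq_or_lt with h0 | h0
    · have hr0 : r = 0 := by simp [hr_def, ← h0]
      rw [hC₂_def, hr0, Real.rpow_zero]; norm_num
    · apply Real.rpow_pos_of_pos; positivity
  clear_value r C₁ C₂
  refine ⟨C₁, hC₁, C₂, hC₂, fun g hg hgpos t ht => ?_⟩
  have htr : (0:ℝ) < t ^ (-r) := Real.rpow_pos_of_pos ht _
  set K : ℝ := C₁ + C₂ * t ^ (-r) with hK_def
  have hK : 0 < K := by positivity
  clear_value K
  -- pointwise bound on the weight
  have key : ∀ m ∈ Set.Ioi (0:ℝ),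
      Real.exp (-(α₁ m * t)) * (1 + m ^ (p + q)) ≤ K * (1 + m ^ p) := by
    intro m hm
    have hm0 : (0:ℝ) < m := hm
    have hmpq : m ^ (p + q) = m ^ p * m ^ q := Real.rpow_add hm0 p q
    have hmp : (0:ℝ) ≤ m ^ p := Real.rpow_nonneg hm0.le p
    have hmq0 : (0:ℝ) ≤ m ^ q := Real.rpow_nonneg hm0.le q
    have hexp_nonneg : (0:ℝ) ≤ Real.exp (-(α₁ m * t)) := (Real.exp_pos _).le
    have hα₁t : 0 ≤ α₁ m * t := mul_nonneg (hα₁nonneg m) ht.le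
    have hexp1 : Real.exp (-(α₁ m * t)) ≤ 1 := Real.exp_le_one_iff.mpr (by linarith)
    have hCt : (0:ℝ) < C₂ * t ^ (-r) := mul_pos hC₂ htr
    rcases le_or_gt m₀ m with hle | hlt
    · -- large masses: use the absorption rate
      have hα := hα₁ m hle
      have hmγ : (0:ℝ) ≤ m ^ γ := Real.rpow_nonneg hm0.le γ
      have hexp2 : Real.exp (-(α₁ m * t)) ≤ Real.exp (-(a₀ * m ^ γ * t)) := by
        apply Real.exp_le_exp.mpr
        have := mul_le_mul_of_nonneg_right hα ht.le
        linarith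
      have hbig : m ^ q * Real.exp (-(a₀ * m ^ γ * t)) ≤ C₂ * t ^ (-r) := by
        have h := aux_rpow_exp r hr (a₀ * t) (by positivity) (m ^ γ) hmγ
        have hmq : (m ^ γ) ^ r = m ^ q := by
          rw [← Real.rpow_mul hm0.le]
          congr 1
          rw [hr_def]
          field_simp
        have harg : a₀ * t * m ^ γ = a₀ * m ^ γ * t := by ring
        rw [hmq, harg] at h
        have hRHS : (r / (Real.exp 1 * (a₀ * t))) ^ r = C₂ * t ^ (-r) := by
          have h1 : t ^ (-r) = (t⁻¹) ^ r := by
            rw [Real.rpow_neg ht.le, ← Real.inv_rpow ht.le]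
          rw [hC₂_def, h1, ← Real.mul_rpow (by positivity) (by positivity)]
          congr 1
          rw [hr_def]
          field_simp
        rw [hRHS] at h
        exact h
      have hamt : 0 ≤ a₀ * m ^ γ * t := by positivity
      have hexp3 : Real.exp (-(a₀ * m ^ γ * t)) ≤ 1 := Real.exp_le_one_iff.mpr (by linarith)
      have hprod := mul_le_mul_of_nonneg_left hbig hmp
      rw [hmpq]
      calc Real.exp (-(α₁ m * t)) * (1 + m ^ p * m ^ q)
          ≤ Real.exp (-(a₀ * m ^ γ * t)) * (1 + m ^ p * m ^ q) := by
            apply mul_le_mul_of_nonneg_right hexp2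
            linarith [mul_nonneg hmp hmq0]
        _ = Real.exp (-(a₀ * m ^ γ * t)) +
              m ^ p * (m ^ q * Real.exp (-(a₀ * m ^ γ * t))) := by ring
        _ ≤ 1 + m ^ p * (C₂ * t ^ (-r)) := by linarith
        _ ≤ K * (1 + m ^ p) := by
            rw [hK_def, hC₁_def]
            have hexpand : (1 + m₀ ^ q + C₂ * t ^ (-r)) * (1 + m ^ p)
                = 1 + m ^ p * (C₂ * t ^ (-r))
                  + (m₀ ^ q + C₂ * t ^ (-r) + m ^ p + m₀ ^ q * m ^ p) := by ring
            linarith [mul_nonneg hm₀q.le hmp]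
    · -- small masses
      have hmq : m ^ q ≤ m₀ ^ q := Real.rpow_le_rpow hm0.le hlt.le hq
      rw [hmpq]
      have hA : (0:ℝ) ≤ 1 + m ^ p * m ^ q := by linarith [mul_nonneg hmp hmq0]
      calc Real.exp (-(α₁ m * t)) * (1 + m ^ p * m ^ q)
          ≤ 1 * (1 + m ^ p * m ^ q) := mul_le_mul_of_nonneg_right hexp1 hA
        _ = 1 + m ^ p * m ^ q := by ring
        _ ≤ 1 + m ^ p * m₀ ^ q := by linarith [mul_le_mul_of_nonneg_left hmq hmp]
        _ ≤ K * (1 + m ^ p) := by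
            rw [hK_def, hC₁_def]
            have hexpand : (1 + m₀ ^ q + C₂ * t ^ (-r)) * (1 + m ^ p)
                = 1 + m ^ p * m₀ ^ q
                  + (m₀ ^ q + C₂ * t ^ (-r) + m ^ p + C₂ * t ^ (-r) * m ^ p) := by ring
            linarith [mul_nonneg hCt.le hmp]
  -- integrate the pointwise bound
  have hpt : ∀ m ∈ Set.Ioi (0:ℝ),
      ENNReal.ofReal (Real.exp (-(α₁ m * t)) * g m * (1 + m ^ (p + q)))
        ≤ ENNReal.ofReal (K * (g m * (1 + m ^ p))) := by
    intro m hm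
    apply ENNReal.ofReal_le_ofReal
    have h := mul_le_mul_of_nonneg_right (key m hm) (hgpos m)
    calc Real.exp (-(α₁ m * t)) * g m * (1 + m ^ (p + q))
        = Real.exp (-(α₁ m * t)) * (1 + m ^ (p + q)) * g m := by ring
      _ ≤ K * (1 + m ^ p) * g m := h
      _ = K * (g m * (1 + m ^ p)) := by ring
  calc ∫⁻ m in Set.Ioi (0:ℝ),
        ENNReal.ofReal (Real.exp (-(α₁ m * t)) * g m * (1 + m ^ (p + q)))
      ≤ ∫⁻ m in Set.Ioi (0:ℝ), ENNReal.ofReal (K * (g m * (1 + m ^ p))) := by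
        apply lintegral_mono_ae
        exact (ae_restrict_iff' measurableSet_Ioi).2 (Filter.Eventually.of_forall hpt)
    _ = ENNReal.ofReal K * ∫⁻ m in Set.Ioi (0:ℝ), ENNReal.ofReal (g m * (1 + m ^ p)) := by
        rw [← lintegral_const_mul' _ _ ENNReal.ofReal_ne_top]
        congr 1 with m
        rw [ENNReal.ofReal_mul hK.le]
end

section
/- Let k₀ ≥ 0, p ≥ 0, q ≥ 0 and set r = p + q. Let k : [0,∞)² → [0,∞) be measurable with k(m, s) ≤ k₀ (1 + m^q)(1 + s^q) for all m, s ≥ 0. Then there exists a constant c (depending only on k₀, p, q) such that for all measurable F, G : [0,∞) → [0,∞): (1/2) ∫₀^∞ ( ∫₀^m k(m − s, s) F(m − s) G(s) ds ) (1 + m^p) dm ≤ c ( ∫₀^∞ F(m)(1 + m^r) dm ) ( ∫₀^∞ G(m)(1 + m^r) dm ). -/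
open MeasureTheory

private lemma aux_pow_sum (p : ℝ) (hp : 0 ≤ p) {a b : ℝ} (ha : 0 < a) (hb : 0 < b) :
    1 + (a + b) ^ p ≤ 2 ^ p * ((1 + a ^ p) * (1 + b ^ p)) := by
  have h2 : (1:ℝ) ≤ 2 ^ p := Real.one_le_rpow (by norm_num) hp
  have hab : (a + b) ^ p ≤ 2 ^ p * (a ^ p + b ^ p) := by
    have hm : a + b ≤ 2 * max a b := by
      rcases le_total a b with h|h
      · rw [max_eq_right h]; linarith
      · rw [max_eq_left h]; linarith
    have h1 : (a+b)^p ≤ (2 * max a b) ^ p := Real.rpow_le_rpow (by positivity) hm hp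
    rw [Real.mul_rpow (by norm_num) (le_max_of_le_left ha.le)] at h1
    refine h1.trans ?_
    gcongr
    rcases max_cases a b with ⟨h1,_⟩|⟨h1,_⟩ <;> rw [h1] <;>
      nlinarith [Real.rpow_nonneg ha.le p, Real.rpow_nonneg hb.le p]
  nlinarith [Real.rpow_nonneg ha.le p, Real.rpow_nonneg hb.le p,
    mul_nonneg (mul_nonneg (le_trans zero_le_one h2) (Real.rpow_nonneg ha.le p))
      (Real.rpow_nonneg hb.le p)]

private lemma aux_split (p q : ℝ) (hp : 0 ≤ p) (hq : 0 ≤ q) {a : ℝ} (ha : 0 < a) :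
    (1 + a ^ p) * (1 + a ^ q) ≤ 2 * (1 + a ^ (p + q)) := by
  have hadd : a ^ (p + q) = a ^ p * a ^ q := Real.rpow_add ha p q
  have hsign : 0 ≤ (a ^ p - 1) * (a ^ q - 1) := by
    rcases le_total 1 a with h|h
    · have h1 := Real.one_le_rpow h hp
      have h2 := Real.one_le_rpow h hq
      nlinarith
    · have h1 := Real.rpow_le_one ha.le h hp
      have h2 := Real.rpow_le_one ha.le h hq
      nlinarith
  nlinarith

private lemma key_ineq (k₀ p q : ℝ) (hk₀ : 0 ≤ k₀) (hp : 0 ≤ p) (hq : 0 ≤ q)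
    {a b K Fa Gb : ℝ} (ha : 0 < a) (hb : 0 < b)
    (hK : K ≤ k₀ * (1 + a ^ q) * (1 + b ^ q)) (hF : 0 ≤ Fa) (hG : 0 ≤ Gb) :
    K * Fa * Gb * (1 + (a + b) ^ p) ≤
      4 * 2 ^ p * k₀ * (Fa * (1 + a ^ (p + q))) * (Gb * (1 + b ^ (p + q))) := by
  have h2 : (0:ℝ) < 2 ^ p := Real.rpow_pos_of_pos two_pos p
  have pa := Real.rpow_nonneg ha.le p; have qa := Real.rpow_nonneg ha.le q
  have pb := Real.rpow_nonneg hb.le p; have qb := Real.rpow_nonneg hb.le q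
  have hra := Real.rpow_nonneg ha.le (p+q); have hrb := Real.rpow_nonneg hb.le (p+q)
  have hab := Real.rpow_nonneg (by positivity : (0:ℝ) ≤ a + b) p
  have H1 := aux_pow_sum p hp ha hb
  have H2 := aux_split p q hp hq ha
  have H3 := aux_split p q hp hq hb
  have key1 : K * (1 + (a+b)^p) ≤ (4 * 2 ^ p * k₀) * ((1 + a ^ (p+q)) * (1 + b ^ (p+q))) := by
    calc K * (1 + (a+b)^p)
        ≤ (k₀ * (1 + a^q) * (1 + b^q)) * (2^p * ((1+a^p)*(1+b^p))) := by
          apply mul_le_mul hK H1 (by positivity) (by positivity)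
      _ = (2^p * k₀) * (((1+a^p)*(1+a^q)) * ((1+b^p)*(1+b^q))) := by ring
      _ ≤ (2^p * k₀) * ((2*(1+a^(p+q))) * (2*(1+b^(p+q)))) := by
          apply mul_le_mul_of_nonneg_left ?_ (by positivity)
          apply mul_le_mul H2 H3 (by positivity) (by positivity)
      _ = (4 * 2^p * k₀) * ((1 + a^(p+q)) * (1 + b^(p+q))) := by ring
  calc K * Fa * Gb * (1 + (a+b)^p) = (K * (1 + (a+b)^p)) * (Fa * Gb) := by ring
    _ ≤ ((4 * 2^p * k₀) * ((1+a^(p+q))*(1+b^(p+q)))) * (Fa * Gb) :=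
        mul_le_mul_of_nonneg_right key1 (mul_nonneg hF hG)
    _ = _ := by ring

private lemma fubini_conv (Φ Ψ : ℝ → ENNReal) (hΦ : Measurable Φ) (hΨ : Measurable Ψ) :
    ∫⁻ m in Set.Ioi (0:ℝ), ∫⁻ s in Set.Ioc (0:ℝ) m, Φ (m - s) * Ψ s
      ≤ (∫⁻ x in Set.Ioi (0:ℝ), Φ x) * ∫⁻ x in Set.Ioi (0:ℝ), Ψ x := by
  have htrans : ∀ s : ℝ, ∫⁻ m in Set.Ici s, Φ (m - s) = ∫⁻ x in Set.Ioi (0:ℝ), Φ x := by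
    intro s
    rw [← lintegral_indicator measurableSet_Ici]
    rw [← lintegral_add_right_eq_self
        (fun m => (Set.Ici s).indicator (fun m => Φ (m - s)) m) s]
    have he : ∀ x : ℝ, (Set.Ici s).indicator (fun m => Φ (m - s)) (x + s)
        = (Set.Ici (0:ℝ)).indicator Φ x := by
      intro x
      simp only [Set.indicator_apply, Set.mem_Ici, le_add_iff_nonneg_left, add_sub_cancel_right]
    simp_rw [he]
    rw [lintegral_indicator measurableSet_Ici]
    exact (setLIntegral_congr Ioi_ae_eq_Ici).symm
  set f : ℝ → ℝ → ENNReal :=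
    fun m s => (Set.Ioc (0:ℝ) m).indicator (fun s => Φ (m - s) * Ψ s) s with hf_def
  have hf : AEMeasurable (Function.uncurry f) ((volume : Measure ℝ).prod volume) := by
    have heq : Function.uncurry f =
        Set.indicator {z : ℝ×ℝ | 0 < z.2 ∧ z.2 ≤ z.1} (fun z => Φ (z.1 - z.2) * Ψ z.2) := by
      funext z
      simp only [Function.uncurry, hf_def, Set.indicator_apply, Set.mem_Ioc, Set.mem_setOf_eq]
    rw [heq]
    refine (Measurable.indicator ?_ ?_).aemeasurable
    · exact (hΦ.comp (measurable_fst.sub measurable_snd)).mul (hΨ.comp measurable_snd)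
    · rw [Set.setOf_and]
      exact (measurableSet_lt measurable_const measurable_snd).inter
        (measurableSet_le measurable_snd measurable_fst)
  calc ∫⁻ m in Set.Ioi (0:ℝ), ∫⁻ s in Set.Ioc (0:ℝ) m, Φ (m-s) * Ψ s
      = ∫⁻ m in Set.Ioi (0:ℝ), ∫⁻ s, f m s := by
        refine setLIntegral_congr_fun measurableSet_Ioi ?_
        intro m _
        beta_reduce
        rw [hf_def, lintegral_indicator measurableSet_Ioc]
    _ ≤ ∫⁻ m, ∫⁻ s, f m s := setLIntegral_le_lintegral _ _
    _ = ∫⁻ s, ∫⁻ m, f m s := lintegral_lintegral_swap hf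
    _ = ∫⁻ s, (∫⁻ x in Set.Ioi (0:ℝ), Φ x) * (Set.Ioi (0:ℝ)).indicator Ψ s := by
        refine lintegral_congr fun s => ?_
        have hms : ∀ m : ℝ, f m s
            = (Set.Ici s).indicator (fun m => Φ (m - s)) m * (Set.Ioi (0:ℝ)).indicator Ψ s := by
          intro m
          simp only [hf_def, Set.indicator_apply, Set.mem_Ioc, Set.mem_Ici, Set.mem_Ioi]
          by_cases h1 : 0 < s <;> by_cases h2 : s ≤ m <;> simp [h1, h2]
        simp_rw [hms]
        have hmeas : Measurable fun m : ℝ => (Set.Ici s).indicator (fun m => Φ (m - s)) m := by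
          refine Measurable.indicator ?_ measurableSet_Ici
          exact hΦ.comp (measurable_id.sub measurable_const)
        rw [lintegral_mul_const _ hmeas, lintegral_indicator measurableSet_Ici, htrans s]
    _ = (∫⁻ x in Set.Ioi (0:ℝ), Φ x) * ∫⁻ x in Set.Ioi (0:ℝ), Ψ x := by
        rw [lintegral_const_mul _ (hΨ.indicator measurableSet_Ioi),
          lintegral_indicator measurableSet_Ioi]

/-- Weighted `L¹` bound for the coagulation gain term: if `k(m,s) ≤ k₀(1+m^q)(1+s^q)`,
then `(1/2)∫₀^∞ (∫₀^m k(m-s,s)F(m-s)G(s) ds)(1+m^p) dm` is bounded by a constant times the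
product of the weighted integrals of `F` and `G` with weight `1+m^{p+q}`. -/
theorem stmt_16 (k₀ p q : ℝ) (hk₀ : 0 ≤ k₀) (hp : 0 ≤ p) (hq : 0 ≤ q)
    (k : ℝ → ℝ → ℝ) (hkmeas : Measurable (Function.uncurry k))
    (hknonneg : ∀ m s, 0 ≤ k m s)
    (hk : ∀ m ≥ (0 : ℝ), ∀ s ≥ (0 : ℝ), k m s ≤ k₀ * (1 + m ^ q) * (1 + s ^ q)) :
    ∃ c > (0 : ℝ), ∀ F G : ℝ → ℝ, Measurable F → Measurable G →
      (∀ m, 0 ≤ F m) → (∀ m, 0 ≤ G m) →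
      ENNReal.ofReal (1 / 2) *
        ∫⁻ m in Set.Ioi (0 : ℝ),
          (∫⁻ s in Set.Ioc (0 : ℝ) m, ENNReal.ofReal (k (m - s) s * F (m - s) * G s)) *
            ENNReal.ofReal (1 + m ^ p)
      ≤ ENNReal.ofReal c *
          ((∫⁻ m in Set.Ioi (0 : ℝ), ENNReal.ofReal (F m * (1 + m ^ (p + q)))) *
            ∫⁻ m in Set.Ioi (0 : ℝ), ENNReal.ofReal (G m * (1 + m ^ (p + q)))) := by
  have h2p : (0:ℝ) < 2 ^ p := Real.rpow_pos_of_pos two_pos p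
  refine ⟨2 * 2 ^ p * (k₀ + 1), by positivity, fun F G hF hG hF0 hG0 => ?_⟩
  set Φ : ℝ → ENNReal := fun x => ENNReal.ofReal (F x * (1 + x ^ (p+q))) with hΦdef
  set Ψ : ℝ → ENNReal := fun x => ENNReal.ofReal (G x * (1 + x ^ (p+q))) with hΨdef
  have hrm : Measurable fun x : ℝ => 1 + x ^ (p+q) :=
    by measurability
  have hΦm : Measurable Φ := ENNReal.measurable_ofReal.comp (hF.mul hrm)
  have hΨm : Measurable Ψ := ENNReal.measurable_ofReal.comp (hG.mul hrm)
  have step1 : ∀ m ∈ Set.Ioi (0:ℝ),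
      (∫⁻ s in Set.Ioc (0:ℝ) m, ENNReal.ofReal (k (m - s) s * F (m - s) * G s)) *
          ENNReal.ofReal (1 + m ^ p)
        ≤ ENNReal.ofReal (4 * 2 ^ p * k₀) * ∫⁻ s in Set.Ioc (0:ℝ) m, Φ (m - s) * Ψ s := by
    intro m hm
    rw [← lintegral_mul_const' _ _ ENNReal.ofReal_ne_top,
      ← lintegral_const_mul' _ _ ENNReal.ofReal_ne_top]
    refine lintegral_mono_ae ?_
    have hae : ∀ᵐ (s:ℝ) ∂(volume : Measure ℝ), s ≠ m := by
      rw [ae_iff]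
      simp only [ne_eq, not_not, Set.setOf_eq_eq_singleton]
      exact measure_singleton m
    rw [ae_restrict_iff' measurableSet_Ioc]
    filter_upwards [hae] with s hs hsm
    obtain ⟨hs0, hsm'⟩ := hsm
    have hsltm : s < m := lt_of_le_of_ne hsm' hs
    have ha : 0 < m - s := sub_pos.2 hsltm
    have hKb := hk (m - s) ha.le s hs0.le
    have hreal := key_ineq k₀ p q hk₀ hp hq ha hs0 hKb (hF0 (m-s)) (hG0 s)
    rw [sub_add_cancel] at hreal
    calc ENNReal.ofReal (k (m - s) s * F (m - s) * G s) * ENNReal.ofReal (1 + m ^ p)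
        = ENNReal.ofReal (k (m - s) s * F (m - s) * G s * (1 + m ^ p)) := by
          rw [← ENNReal.ofReal_mul
            (mul_nonneg (mul_nonneg (hknonneg _ _) (hF0 _)) (hG0 _))]
      _ ≤ ENNReal.ofReal (4 * 2 ^ p * k₀ * (F (m-s) * (1 + (m-s) ^ (p+q))) *
            (G s * (1 + s ^ (p+q)))) := ENNReal.ofReal_le_ofReal hreal
      _ = ENNReal.ofReal (4 * 2 ^ p * k₀) * (Φ (m - s) * Ψ s) := by
          have hc' : (0:ℝ) ≤ 4 * 2 ^ p * k₀ := mul_nonneg (by positivity) hk₀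
          have hA : 0 ≤ F (m - s) * (1 + (m - s) ^ (p + q)) :=
            mul_nonneg (hF0 _) (by nlinarith [Real.rpow_nonneg ha.le (p + q)])
          rw [ENNReal.ofReal_mul (mul_nonneg hc' hA), ENNReal.ofReal_mul hc', mul_assoc]
  have hconst : (0:ℝ) ≤ 4 * 2 ^ p * k₀ := by positivity
  calc ENNReal.ofReal (1 / 2) *
        ∫⁻ m in Set.Ioi (0 : ℝ),
          (∫⁻ s in Set.Ioc (0 : ℝ) m, ENNReal.ofReal (k (m - s) s * F (m - s) * G s)) *
            ENNReal.ofReal (1 + m ^ p)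
      ≤ ENNReal.ofReal (1 / 2) *
        ∫⁻ m in Set.Ioi (0 : ℝ), ENNReal.ofReal (4 * 2 ^ p * k₀) *
          ∫⁻ s in Set.Ioc (0:ℝ) m, Φ (m - s) * Ψ s := by
        refine mul_le_mul_right (lintegral_mono_ae ?_) _
        rw [ae_restrict_iff' measurableSet_Ioi]
        exact Filter.Eventually.of_forall step1
    _ = (ENNReal.ofReal (1 / 2) * ENNReal.ofReal (4 * 2 ^ p * k₀)) *
          ∫⁻ m in Set.Ioi (0:ℝ), ∫⁻ s in Set.Ioc (0:ℝ) m, Φ (m - s) * Ψ s := by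
        rw [lintegral_const_mul' _ _ ENNReal.ofReal_ne_top]; ring
    _ ≤ (ENNReal.ofReal (1 / 2) * ENNReal.ofReal (4 * 2 ^ p * k₀)) *
          ((∫⁻ x in Set.Ioi (0:ℝ), Φ x) * ∫⁻ x in Set.Ioi (0:ℝ), Ψ x) :=
        mul_le_mul_right (fubini_conv Φ Ψ hΦm hΨm) _
    _ ≤ ENNReal.ofReal (2 * 2 ^ p * (k₀ + 1)) *
          ((∫⁻ x in Set.Ioi (0:ℝ), Φ x) * ∫⁻ x in Set.Ioi (0:ℝ), Ψ x) := by
        refine mul_le_mul_left ?_ _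
        rw [← ENNReal.ofReal_mul (by norm_num)]
        refine ENNReal.ofReal_le_ofReal ?_
        nlinarith [h2p, hk₀, mul_pos h2p (show (0:ℝ) < 2 by norm_num)]
end
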